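/- There exists a nondegenerate symmetric bilinear form B on the 5-dimensional real Lie algebra 𝔤 with nonzero brackets [e₁,e₅] = e₄ − e₃, [e₂,e₅] = −e₁ + e₃ + e₄, [e₁,e₂] = e₃ which is invariant, i.e. B([x,y],z) = B(x,[y,z]) for all x, y, z ∈ 𝔤. -/

import Mathlib

/-- The Lie bracket on `ℝ^5` determined (0-indexed coordinates, `e₁ = ` index `0`, ...,
`e₅ = ` index `4`) by `[e₁,e₅] = e₄ − e₃`, `[e₂,e₅] = −e₁ + e₃ + e₄`, `[e₁,e₂] = e₃`,
all other brackets of basis vectors being zero, extended by bilinearity and antisymmetry: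
`[x,y] = (x₁y₅ − x₅y₁)(e₄ − e₃) + (x₂y₅ − x₅y₂)(−e₁ + e₃ + e₄) + (x₁y₂ − x₂y₁)e₃`. -/
noncomputable def br (x y : Fin 5 → ℝ) : Fin 5 → ℝ :=
  ![x 4 * y 1 - x 1 * y 4,
    0,
    (x 4 * y 0 - x 0 * y 4) + (x 1 * y 4 - x 4 * y 1) + (x 0 * y 1 - x 1 * y 0),
    (x 0 * y 4 - x 4 * y 0) + (x 1 * y 4 - x 4 * y 1),
    0]

noncomputable def Bf : (Fin 5 → ℝ) →ₗ[ℝ] (Fin 5 → ℝ) →ₗ[ℝ] ℝ :=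
  LinearMap.mk₂ ℝ
    (fun x y => -(x 0 * y 0) - x 0 * y 1 - x 1 * y 0 + x 1 * y 1 + 2 * (x 0 * y 4)
      + 2 * (x 4 * y 0) - x 1 * y 3 - x 3 * y 1 + x 2 * y 4 + x 4 * y 2
      + x 3 * y 4 + x 4 * y 3)
    (by intros; simp [Pi.add_apply]; ring)
    (by intros; simp [Pi.smul_apply, smul_eq_mul]; ring)
    (by intros; simp [Pi.add_apply]; ring)
    (by intros; simp [Pi.smul_apply, smul_eq_mul]; ring)

lemma br0 (x y : Fin 5 → ℝ) : br x y 0 = x 4 * y 1 - x 1 * y 4 := rfl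
lemma br1 (x y : Fin 5 → ℝ) : br x y 1 = 0 := rfl
lemma br2 (x y : Fin 5 → ℝ) :
    br x y 2 = (x 4 * y 0 - x 0 * y 4) + (x 1 * y 4 - x 4 * y 1) + (x 0 * y 1 - x 1 * y 0) := rfl
lemma br3 (x y : Fin 5 → ℝ) :
    br x y 3 = (x 0 * y 4 - x 4 * y 0) + (x 1 * y 4 - x 4 * y 1) := rfl
lemma br4 (x y : Fin 5 → ℝ) : br x y 4 = 0 := rfl

/-- There exists a nondegenerate symmetric bilinear form `B` on the 5-dimensional real
Lie algebra with nonzero brackets `[e₁,e₅] = e₄ − e₃`, `[e₂,e₅] = −e₁ + e₃ + e₄`,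
`[e₁,e₂] = e₃` which is invariant: `B([x,y],z) = B(x,[y,z])` for all `x, y, z`. -/
theorem stmt_2 :
    ∃ B : (Fin 5 → ℝ) →ₗ[ℝ] (Fin 5 → ℝ) →ₗ[ℝ] ℝ,
      (∀ x y : Fin 5 → ℝ, B x y = B y x) ∧
      (∀ x : Fin 5 → ℝ, (∀ y : Fin 5 → ℝ, B x y = 0) → x = 0) ∧
      (∀ x y z : Fin 5 → ℝ, B (br x y) z = B x (br y z)) := by
  refine ⟨Bf, fun x y => ?_, fun x h => ?_, fun x y z => ?_⟩
  · simp only [Bf, LinearMap.mk₂_apply]; ring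
  · have h0 := h ![1,0,0,0,0]
    have h1 := h ![0,1,0,0,0]
    have h2 := h ![0,0,1,0,0]
    have h3 := h ![0,0,0,1,0]
    have h4 := h ![0,0,0,0,1]
    simp only [Bf, LinearMap.mk₂_apply, Matrix.cons_val_zero, Matrix.cons_val_one,
      Matrix.head_cons] at h0 h1 h2 h3 h4
    norm_num [Matrix.cons_val_fin_one, show ((3:Fin 5)) = ⟨3, by norm_num⟩ from rfl] at h0 h1 h2 h3 h4
    simp only [Matrix.cons_val, mul_zero, mul_one, add_zero, sub_zero, zero_add] at h0 h1 h2 h3 h4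
    funext i
    fin_cases i <;> simp <;> linarith
  · simp only [Bf, LinearMap.mk₂_apply, br0, br1, br2, br3, br4]; ring
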